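/- For every natural number n ≥ 2 and every nonzero complex number q, there exists an invertible n×n complex matrix M such that tr(Mᵀ · M⁻¹) = -(q + q⁻¹). -/

import Mathlib

open Matrix

lemma stdBasisMatrix_transpose' {n : ℕ} (i j : Fin n) (c : ℂ) :
    (Matrix.single i j c)ᵀ = Matrix.single j i c := by
  ext a b
  simp [Matrix.single, Matrix.transpose_apply, and_comm]

/-- For every `n ≥ 2` and every nonzero `q : ℂ`, there is an invertible `n×n` complex
matrix `M` with `tr(Mᵀ * M⁻¹) = -(q + q⁻¹)`. -/
theorem exists_invertible_matrix_trace_eq_neg_quantum_two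
    (n : ℕ) (hn : 2 ≤ n) (q : ℂ) (hq : q ≠ 0) :
    ∃ M : Matrix (Fin n) (Fin n) ℂ, IsUnit M ∧ (Mᵀ * M⁻¹).trace = -(q + q⁻¹) := by
  obtain ⟨a, ha⟩ : ∃ a : ℂ, a ^ 2 = (n : ℂ) + q + q⁻¹ :=
    IsAlgClosed.exists_pow_nat_eq _ two_pos
  set i0 : Fin n := ⟨0, by omega⟩
  set i1 : Fin n := ⟨1, by omega⟩
  have hne : i0 ≠ i1 := by simp [i0, i1, Fin.ext_iff]
  set E : Matrix (Fin n) (Fin n) ℂ := Matrix.single i0 i1 a with hE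
  have hEE : E * E = 0 := by
    rw [hE, Matrix.single_mul_single_of_ne (h := Ne.symm hne)]
  set M : Matrix (Fin n) (Fin n) ℂ := 1 + E with hM
  have hinv : M * (1 - E) = 1 := by
    have h : M * (1 - E) = 1 - E * E := by rw [hM]; noncomm_ring
    rw [h, hEE, sub_zero]
  refine ⟨M, ?_, ?_⟩
  · letI := invertibleOfRightInverse (h := hinv)
    exact isUnit_of_invertible M
  · have hMinv : M⁻¹ = 1 - E := Matrix.inv_eq_right_inv hinv
    have hET : Mᵀ = 1 + Matrix.single i1 i0 a := by
      rw [hM, Matrix.transpose_add, Matrix.transpose_one, hE, stdBasisMatrix_transpose']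
    rw [hMinv, hET]
    have h1 : (1 + Matrix.single i1 i0 a) * (1 - E) =
        1 - E + Matrix.single i1 i0 a - Matrix.single i1 i0 a * E := by
      noncomm_ring
    rw [h1, hE, Matrix.single_mul_single_same]
    have htr : Matrix.trace (1 - Matrix.single i0 i1 a +
        Matrix.single i1 i0 a - Matrix.single i1 i1 (a * a)) =
        (n : ℂ) - (a * a) := by
      rw [Matrix.trace_sub, Matrix.trace_add, Matrix.trace_sub,
        Matrix.trace_single_eq_of_ne _ _ _ hne,
        Matrix.trace_single_eq_of_ne _ _ _ (Ne.symm hne),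
        Matrix.trace_single_eq_same, Matrix.trace_one]
      simp
    rw [htr, ← sq, ha]
    ring
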